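/- Let μ be a finite positive Borel measure on ℂ concentrated on the open unit disc 𝔻 = {z ∈ ℂ : |z| < 1} (i.e., μ(ℂ∖𝔻) = 0). Then the following are equivalent: (a) there exists C₁ > 0 such that μ(𝔻 ∩ B_r(z)) ≤ C₁·r for every r > 0 and every z ∈ ℂ with |z| = 1, where B_r(z) = {w ∈ ℂ : |w − z| < r}; (b) sup_{z∈𝔻} ∫_𝔻 (1 − |z|²)/|1 − conj(z)·w|² dμ(w) < ∞. -/

import Mathlib

open MeasureTheory
open scoped ENNReal

private lemma conj_unit_mul {ζ : ℂ} (hζ : ‖ζ‖ = 1) :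
    (starRingEnd ℂ) ζ * ζ = 1 := by
  rw [Complex.conj_mul']
  norm_cast
  simp [hζ]

private lemma abs_one_sub_conj_unit {ζ w : ℂ} (hζ : ‖ζ‖ = 1) :
    ‖1 - (starRingEnd ℂ) ζ * w‖ = ‖w - ζ‖ := by
  have h : 1 - (starRingEnd ℂ) ζ * w = (starRingEnd ℂ) ζ * (ζ - w) := by
    rw [mul_sub, conj_unit_mul hζ]
  rw [h, norm_mul, Complex.norm_conj, hζ, one_mul, ← norm_neg, neg_sub]

/-- Key lower bound: `(1-ρ) + |w - ζ| ≤ 3 |1 - conj(ρζ) w|`. -/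
private lemma key_lb {ρ : ℝ} (hρ0 : 0 ≤ ρ) (hρ1 : ρ ≤ 1) {ζ w : ℂ}
    (hζ : ‖ζ‖ = 1) (hw : ‖w‖ ≤ 1) :
    (1 - ρ) + ‖w - ζ‖ ≤ 3 * ‖1 - (starRingEnd ℂ) ((ρ : ℂ) * ζ) * w‖ := by
  set A := ‖1 - (starRingEnd ℂ) ((ρ : ℂ) * ζ) * w‖ with hA
  have habs : ‖(starRingEnd ℂ) ((ρ : ℂ) * ζ) * w‖ = ρ * ‖w‖ := by
    simp [norm_mul, Complex.norm_conj, Complex.norm_real, Real.norm_eq_abs, hζ, abs_of_nonneg hρ0]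
  -- first : 1 - ρ ≤ A
  have h1 : 1 - ρ ≤ A := by
    have := norm_add_le (1 - (starRingEnd ℂ) ((ρ : ℂ) * ζ) * w)
      ((starRingEnd ℂ) ((ρ : ℂ) * ζ) * w)
    simp only [sub_add_cancel, norm_one] at this
    have h2 : ρ * ‖w‖ ≤ ρ := by nlinarith
    rw [habs] at this
    linarith
  -- second : |w - ζ| - (1-ρ) ≤ A
  have h2 : ‖w - ζ‖ - (1 - ρ) ≤ A := by
    have hconj : (starRingEnd ℂ) ((ρ : ℂ) * ζ) = (ρ : ℂ) * (starRingEnd ℂ) ζ := by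
      rw [map_mul, Complex.conj_ofReal]
    have hsplit : 1 - (starRingEnd ℂ) ζ * w =
        (1 - (starRingEnd ℂ) ((ρ : ℂ) * ζ) * w) + (-(((1 : ℂ) - (ρ : ℂ)) * ((starRingEnd ℂ) ζ * w))) := by
      rw [hconj]; ring
    have htri := norm_add_le (1 - (starRingEnd ℂ) ((ρ : ℂ) * ζ) * w)
      (-(((1 : ℂ) - (ρ : ℂ)) * ((starRingEnd ℂ) ζ * w)))
    rw [← hsplit, abs_one_sub_conj_unit hζ, norm_neg] at htri
    have habs2 : ‖((1 : ℂ) - (ρ : ℂ)) * ((starRingEnd ℂ) ζ * w)‖ ≤ 1 - ρ := by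
      rw [norm_mul, norm_mul, Complex.norm_conj, hζ, one_mul]
      have : ‖(1 : ℂ) - (ρ : ℂ)‖ = 1 - ρ := by
        rw [show ((1 : ℂ) - (ρ : ℂ)) = (((1 - ρ : ℝ)) : ℂ) by push_cast; ring,
          Complex.norm_real, Real.norm_eq_abs, abs_of_nonneg (by linarith)]
      rw [this]
      nlinarith
    linarith
  linarith

theorem stmt_13 (μ : Measure ℂ) [IsFiniteMeasure μ]
    (hμ : μ {z : ℂ | 1 ≤ ‖z‖} = 0) :
    (∃ C₁ > 0, ∀ r > (0 : ℝ), ∀ z : ℂ, ‖z‖ = 1 →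
        μ ({w : ℂ | ‖w‖ < 1} ∩ Metric.ball z r) ≤ ENNReal.ofReal (C₁ * r)) ↔
      (∃ M : ℝ≥0∞, M < ⊤ ∧ ∀ z : ℂ, ‖z‖ < 1 →
        ∫⁻ w in {w : ℂ | ‖w‖ < 1},
          ENNReal.ofReal ((1 - ‖z‖ ^ 2) /
            ‖1 - (starRingEnd ℂ) z * w‖ ^ 2) ∂μ ≤ M) := by
  set D : Set ℂ := {w : ℂ | ‖w‖ < 1} with hD
  have hDmeas : MeasurableSet D := (isOpen_lt continuous_norm continuous_const).measurableSet
  constructor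
  · -- (a) → (b)
    rintro ⟨C₁, hC₁, ha⟩
    refine ⟨ENNReal.ofReal (288 * C₁), ENNReal.ofReal_lt_top, ?_⟩
    intro z hz
    -- write z = ρ • ζ with ζ on the unit circle
    set ρ : ℝ := ‖z‖ with hρ
    have hρ0 : 0 ≤ ρ := norm_nonneg z
    set δ : ℝ := 1 - ρ with hδ
    have hδpos : 0 < δ := by simp [hδ]; linarith
    obtain ⟨ζ, hζ, hzζ⟩ : ∃ ζ : ℂ, ‖ζ‖ = 1 ∧ z = (ρ : ℂ) * ζ := by
      rcases eq_or_ne z 0 with h0 | h0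
      · exact ⟨1, by simp, by simp [h0, hρ]⟩
      · have hρne : (ρ : ℂ) ≠ 0 := by
          simpa [hρ] using (Complex.ofReal_ne_zero.mpr (norm_ne_zero_iff.mpr h0))
        refine ⟨z / (ρ : ℂ), ?_, ?_⟩
        · rw [norm_div, Complex.norm_real, Real.norm_eq_abs, abs_of_nonneg hρ0, ← hρ, div_self]
          simpa [hρ] using h0
        · field_simp
    -- the dyadic pieces
    set A : ℕ → Set ℂ := fun k => match k with
      | 0 => D ∩ Metric.ball ζ δ
      | (k+1) => D ∩ (Metric.ball ζ (2^(k+1) * δ) \ Metric.ball ζ (2^k * δ)) with hAdef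
    have hAmeas : ∀ k, MeasurableSet (A k) := by
      rintro (_ | k)
      · exact hDmeas.inter measurableSet_ball
      · exact hDmeas.inter (measurableSet_ball.diff measurableSet_ball)
    -- coverage
    have hcov : D ⊆ ⋃ k, A k := by
      intro w hw
      have hw1 : ‖w‖ < 1 := hw
      by_cases hd : dist w ζ < δ
      · exact Set.mem_iUnion.2 ⟨0, hw, by simpa [Metric.mem_ball] using hd⟩
      · push_neg at hd
        have hex : ∃ n : ℕ, dist w ζ < 2 ^ n * δ := by
          obtain ⟨n, hn⟩ := pow_unbounded_of_one_lt ((dist w ζ) / δ) (by norm_num : (1:ℝ) < 2)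
          exact ⟨n, by rw [← div_lt_iff₀ hδpos] at *; linarith [hn]⟩
        have hnlt := Nat.find_spec hex
        cases hfind : Nat.find hex with
        | zero =>
          rw [hfind] at hnlt
          simp only [pow_zero, one_mul] at hnlt
          exact absurd hnlt (not_lt.2 hd)
        | succ m =>
          have hm : ¬ dist w ζ < 2 ^ m * δ := Nat.find_min hex (by omega)
          push_neg at hm
          rw [hfind] at hnlt
          refine Set.mem_iUnion.2 ⟨m + 1, hw, Metric.mem_ball.2 hnlt, ?_⟩
          simpa [Metric.mem_ball] using not_lt.2 hm
    -- pointwise bound on each piece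
    have hpow24 : ∀ k : ℕ, (4:ℝ) ^ k = (2 ^ k) ^ 2 := by
      intro k
      rw [show (4:ℝ) = 2 ^ 2 by norm_num, ← pow_mul, mul_comm 2 k, pow_mul]
    have hmain : ∀ w : ℂ, ‖w‖ < 1 → ∀ t : ℝ, 0 ≤ t → t ≤ ‖w - ζ‖ →
        (1 - ‖z‖ ^ 2) / ‖1 - (starRingEnd ℂ) z * w‖ ^ 2
          ≤ 18 * δ / (δ + t) ^ 2 := by
      intro w hw1 t ht0 htd
      have hρ1 : ρ ≤ 1 := by linarith
      have hlb := key_lb hρ0 hρ1 hζ hw1.le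
      rw [← hzζ] at hlb
      set Aa := ‖1 - (starRingEnd ℂ) z * w‖ with hAa
      set d := ‖w - ζ‖ with hdd
      have hd0 : 0 ≤ d := norm_nonneg _
      have hApos : 0 < Aa := by nlinarith
      have hnum : 1 - ‖z‖ ^ 2 ≤ 2 * δ := by
        rw [← hρ]; nlinarith
      have hnum0 : 0 ≤ 1 - ‖z‖ ^ 2 := by
        rw [← hρ]; nlinarith
      rw [div_le_div_iff₀ (by positivity) (by positivity)]
      have h3 : δ + t ≤ 3 * Aa := by linarith
      have h9 : (δ + t) ^ 2 ≤ 9 * Aa ^ 2 := by nlinarith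
      nlinarith [mul_le_mul hnum h9 (by positivity) (by linarith)]
    have hptwise : ∀ k, ∀ w ∈ A k,
        (1 - ‖z‖ ^ 2) / ‖1 - (starRingEnd ℂ) z * w‖ ^ 2
          ≤ 72 / (4 ^ k * δ) := by
      intro k
      match k with
      | 0 =>
        rintro w ⟨hwD, _⟩
        have hw1 : ‖w‖ < 1 := hwD
        refine le_trans (hmain w hw1 0 le_rfl (norm_nonneg _)) ?_
        rw [add_zero, pow_zero, one_mul, div_le_div_iff₀ (by positivity) (by positivity)]
        nlinarith
      | (m+1) =>
        rintro w ⟨hwD, _, hout⟩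
        have hw1 : ‖w‖ < 1 := hwD
        have hml : 2 ^ m * δ ≤ ‖w - ζ‖ := by
          simpa [Metric.mem_ball, Complex.dist_eq, not_lt] using hout
        refine le_trans (hmain w hw1 (2 ^ m * δ) (by positivity) hml) ?_
        rw [div_le_div_iff₀ (by positivity) (by positivity)]
        have h1 : (4:ℝ) ^ (m+1) = 4 * (2 ^ m) ^ 2 := by
          rw [pow_succ, hpow24 m]; ring
        rw [h1]
        have h2m : (0:ℝ) < 2 ^ m := by positivity
        nlinarith [sq_nonneg (2 ^ m * δ), mul_pos h2m hδpos]
    -- measure bound on each piece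
    have hmu : ∀ k, μ (A k) ≤ ENNReal.ofReal (C₁ * (2 ^ k * δ)) := by
      intro k
      have hsub : A k ⊆ D ∩ Metric.ball ζ (2 ^ k * δ) := by
        match k with
        | 0 => intro w hw; exact ⟨hw.1, by simpa using hw.2⟩
        | (m+1) => intro w hw; exact ⟨hw.1, hw.2.1⟩
      exact le_trans (measure_mono hsub) (ha _ (by positivity) ζ hζ)
    -- put it together
    calc ∫⁻ w in D, ENNReal.ofReal ((1 - ‖z‖ ^ 2) /
            ‖1 - (starRingEnd ℂ) z * w‖ ^ 2) ∂μ
        ≤ ∫⁻ w in ⋃ k, A k, ENNReal.ofReal ((1 - ‖z‖ ^ 2) /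
            ‖1 - (starRingEnd ℂ) z * w‖ ^ 2) ∂μ := lintegral_mono_set hcov
      _ ≤ ∑' k, ∫⁻ w in A k, ENNReal.ofReal ((1 - ‖z‖ ^ 2) /
            ‖1 - (starRingEnd ℂ) z * w‖ ^ 2) ∂μ := lintegral_iUnion_le _ _
      _ ≤ ∑' k, ENNReal.ofReal (144 * C₁ * (1/2)^k) := by
          refine ENNReal.tsum_le_tsum fun k => ?_
          calc ∫⁻ w in A k, ENNReal.ofReal ((1 - ‖z‖ ^ 2) /
                ‖1 - (starRingEnd ℂ) z * w‖ ^ 2) ∂μ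
              ≤ ∫⁻ _ in A k, ENNReal.ofReal (72 / (4 ^ k * δ)) ∂μ :=
                setLIntegral_mono' (hAmeas k)
                  (fun w hw => ENNReal.ofReal_le_ofReal (hptwise k w hw))
            _ = ENNReal.ofReal (72 / (4 ^ k * δ)) * μ (A k) := setLIntegral_const _ _
            _ ≤ ENNReal.ofReal (72 / (4 ^ k * δ)) * ENNReal.ofReal (C₁ * (2 ^ k * δ)) := by
                exact mul_le_mul_right (hmu k) _
            _ = ENNReal.ofReal (72 / (4 ^ k * δ) * (C₁ * (2 ^ k * δ))) :=
                (ENNReal.ofReal_mul (by positivity)).symm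
            _ ≤ ENNReal.ofReal (144 * C₁ * (1/2)^k) := by
                apply ENNReal.ofReal_le_ofReal
                have h2k : (0:ℝ) < 2 ^ k := by positivity
                have heq1 : 72 / (4 ^ k * δ) * (C₁ * (2 ^ k * δ)) = 72 * C₁ / 2 ^ k := by
                  rw [hpow24 k]
                  field_simp
                have heq2 : 144 * C₁ * ((1:ℝ)/2) ^ k = 144 * C₁ / 2 ^ k := by
                  rw [div_pow, one_pow]
                  ring
                rw [heq1, heq2, div_le_div_iff₀ h2k h2k]
                nlinarith [mul_pos hC₁ h2k]
      _ ≤ ENNReal.ofReal (288 * C₁) := by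
          have heq : ∀ k : ℕ, ENNReal.ofReal (144 * C₁ * (1/2)^k)
              = ENNReal.ofReal (144 * C₁) * (2⁻¹ : ℝ≥0∞)^k := by
            intro k
            rw [ENNReal.ofReal_mul (by positivity)]
            congr 1
            rw [ENNReal.ofReal_pow (by norm_num)]
            congr 1
            rw [ENNReal.ofReal_div_of_pos (by norm_num)]
            simp [ENNReal.ofReal_one, ENNReal.ofReal_ofNat]
          simp_rw [heq]
          rw [ENNReal.tsum_mul_left, ENNReal.tsum_geometric]
          rw [show ((1:ℝ≥0∞) - 2⁻¹) = 2⁻¹ from ENNReal.one_sub_inv_two, inv_inv]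
          rw [show (2:ℝ≥0∞) = ENNReal.ofReal 2 by simp [ENNReal.ofReal_ofNat],
            ← ENNReal.ofReal_mul (by positivity)]
          apply ENNReal.ofReal_le_ofReal
          linarith
  · -- (b) → (a)
    rintro ⟨M, hM, hb⟩
    set Cμ : ℝ := (μ Set.univ).toReal with hCμ
    set Mr : ℝ := M.toReal with hMr
    have hCμ0 : 0 ≤ Cμ := ENNReal.toReal_nonneg
    have hMr0 : 0 ≤ Mr := ENNReal.toReal_nonneg
    refine ⟨4 * Mr + 2 * Cμ + 1, by positivity, ?_⟩
    intro r hr ζ hζ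
    by_cases hr2 : (1:ℝ)/2 ≤ r
    · calc μ (D ∩ Metric.ball ζ r) ≤ μ Set.univ := measure_mono (Set.subset_univ _)
        _ = ENNReal.ofReal Cμ := (ENNReal.ofReal_toReal (measure_ne_top μ _)).symm
        _ ≤ ENNReal.ofReal ((4 * Mr + 2 * Cμ + 1) * r) := by
            apply ENNReal.ofReal_le_ofReal; nlinarith
    · push_neg at hr2
      set z : ℂ := ((1 - r : ℝ) : ℂ) * ζ with hzdef
      have hzabs : ‖z‖ = 1 - r := by
        rw [hzdef, norm_mul, Complex.norm_real, Real.norm_eq_abs, hζ, mul_one, abs_of_nonneg (by linarith)]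
      have hz1 : ‖z‖ < 1 := by rw [hzabs]; linarith
      have hint := hb z hz1
      set S : Set ℂ := D ∩ Metric.ball ζ r with hS
      have hSmeas : MeasurableSet S := hDmeas.inter measurableSet_ball
      -- pointwise lower bound on S
      have hlow : ∀ w ∈ S, ENNReal.ofReal (1 / (4 * r)) ≤
          ENNReal.ofReal ((1 - ‖z‖ ^ 2) /
            ‖1 - (starRingEnd ℂ) z * w‖ ^ 2) := by
        intro w hw
        have hw1 : ‖w‖ < 1 := hw.1
        have hwd : ‖w - ζ‖ < r := by
          have := hw.2; rw [Metric.mem_ball, Complex.dist_eq] at this; exact this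
        apply ENNReal.ofReal_le_ofReal
        set Aa := ‖1 - (starRingEnd ℂ) z * w‖ with hAa
        -- upper bound Aa ≤ 2 r
        have hup : Aa ≤ 2 * r := by
          have hsplit : 1 - (starRingEnd ℂ) z * w
              = (1 - (starRingEnd ℂ) ζ * w) + ((r : ℂ) * ((starRingEnd ℂ) ζ * w)) := by
            rw [hzdef, map_mul, Complex.conj_ofReal]
            push_cast
            ring
          have htri := norm_add_le (1 - (starRingEnd ℂ) ζ * w)
            ((r : ℂ) * ((starRingEnd ℂ) ζ * w))
          rw [← hsplit, abs_one_sub_conj_unit hζ] at htri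
          have h2 : ‖(r : ℂ) * ((starRingEnd ℂ) ζ * w)‖ ≤ r := by
            rw [norm_mul, norm_mul, Complex.norm_conj, hζ, one_mul, Complex.norm_real, Real.norm_eq_abs,
              abs_of_nonneg hr.le]
            nlinarith
          rw [hAa]
          linarith [htri]
        -- lower bound Aa ≥ r
        have hlo : r ≤ Aa := by
          have := norm_add_le (1 - (starRingEnd ℂ) z * w) ((starRingEnd ℂ) z * w)
          simp only [sub_add_cancel, norm_one] at this
          have habs : ‖(starRingEnd ℂ) z * w‖ ≤ 1 - r := by
            rw [norm_mul, Complex.norm_conj, hzabs]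
            nlinarith
          rw [hAa]; linarith
        have hApos : 0 < Aa := lt_of_lt_of_le hr hlo
        have hnum : r ≤ 1 - ‖z‖ ^ 2 := by rw [hzabs]; nlinarith
        rw [div_le_div_iff₀ (by positivity) (by positivity)]
        nlinarith
      -- conclude
      have hkey : ENNReal.ofReal (1 / (4 * r)) * μ S ≤ M := by
        calc ENNReal.ofReal (1 / (4 * r)) * μ S
            = ∫⁻ _ in S, ENNReal.ofReal (1 / (4 * r)) ∂μ := (setLIntegral_const _ _).symm
          _ ≤ ∫⁻ w in S, ENNReal.ofReal ((1 - ‖z‖ ^ 2) /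
                ‖1 - (starRingEnd ℂ) z * w‖ ^ 2) ∂μ :=
              setLIntegral_mono' hSmeas hlow
          _ ≤ ∫⁻ w in D, ENNReal.ofReal ((1 - ‖z‖ ^ 2) /
                ‖1 - (starRingEnd ℂ) z * w‖ ^ 2) ∂μ :=
              lintegral_mono_set Set.inter_subset_left
          _ ≤ M := hint
      have hc0 : ENNReal.ofReal (1 / (4 * r)) ≠ 0 := by
        simp [ENNReal.ofReal_eq_zero]
        positivity
      have hct : ENNReal.ofReal (1 / (4 * r)) ≠ ⊤ := ENNReal.ofReal_ne_top
      have : μ S ≤ M / ENNReal.ofReal (1 / (4 * r)) := by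
        rw [ENNReal.le_div_iff_mul_le (Or.inl hc0) (Or.inl hct), mul_comm]
        exact hkey
      calc μ (D ∩ Metric.ball ζ r) ≤ M / ENNReal.ofReal (1 / (4 * r)) := this
        _ = ENNReal.ofReal Mr * ENNReal.ofReal (4 * r) := by
            rw [div_eq_mul_inv, ← ENNReal.ofReal_inv_of_pos (by positivity),
              ENNReal.ofReal_toReal hM.ne]
            congr 1
            rw [one_div, inv_inv]
        _ = ENNReal.ofReal (Mr * (4 * r)) := by rw [ENNReal.ofReal_mul hMr0]
        _ ≤ ENNReal.ofReal ((4 * Mr + 2 * Cμ + 1) * r) := by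
            apply ENNReal.ofReal_le_ofReal; nlinarith
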